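/- DCFL is not contained in REG/n; equivalently, REG/n ≠ DCFL/n. Concretely, there exists a deterministic context-free language (e.g., Equal = {w ∈ {0,1}* : #_0(w) = #_1(w)}) that is not in REG/n. -/

import Mathlib

/-- A deterministic pushdown automaton (with ε-moves), with state type `Q`,
input alphabet `α` and stack alphabet `Γ`.  `step q a γ` gives the (unique)
move available in state `q` with top stack symbol `γ` on reading `a` (for
`a = some _`) or spontaneously (for `a = none`); a move replaces the top
stack symbol by a string of stack symbols.  Determinism demands that an
ε-move excludes reading moves. -/
structure DPDA (α Q Γ : Type) where
  start : Q
  startSym : Γ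
  step : Q → Option α → Γ → Option (Q × List Γ)
  final : Set Q
  deterministic : ∀ q γ, (step q none γ).isSome → ∀ a, step q (some a) γ = none

/-- `M.Steps c x c'` : the DPDA `M` can go from configuration `c`
(state, stack) to configuration `c'` while consuming the input string `x`. -/
inductive DPDA.Steps {α Q Γ : Type} (M : DPDA α Q Γ) :
    Q × List Γ → List α → Q × List Γ → Prop
  | refl (c) : DPDA.Steps M c [] c
  | read {q a t s q' u w c} : M.step q (some a) t = some (q', u) →
      DPDA.Steps M (q', u ++ s) w c → DPDA.Steps M (q, t :: s) (a :: w) c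
  | eps {q t s q' u w c} : M.step q none t = some (q', u) →
      DPDA.Steps M (q', u ++ s) w c → DPDA.Steps M (q, t :: s) w c

/-- The language accepted by a DPDA (by final state). -/
def DPDA.accepts {α Q Γ : Type} (M : DPDA α Q Γ) : Language α :=
  { x | ∃ q s, M.Steps (M.start, [M.startSym]) x (q, s) ∧ q ∈ M.final }

/-- A deterministic context-free language: one accepted by a DPDA with
finitely many states and stack symbols. -/
def IsDCFL {σ : Type} (P : Language σ) : Prop :=
  ∃ (Q Γ : Type) (_ : Fintype Q) (_ : Fintype Γ) (M : DPDA σ Q Γ),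
    M.accepts = P

/-- `REG/n`: regular languages with length-respecting advice. -/
def InREGn {σ : Type} (P : Language σ) : Prop :=
  ∃ (Γ : Type) (_ : Fintype Γ) (h : ℕ → List Γ),
    (∀ n, (h n).length = n) ∧
    ∃ L : Language (σ × Γ), L.IsRegular ∧
      ∀ x : List σ, x ∈ P ↔ x.zip (h x.length) ∈ L

/-- `DCFL/n`: deterministic context-free languages with length-respecting
advice. -/
def InDCFLn {σ : Type} (P : Language σ) : Prop :=
  ∃ (Γ : Type) (_ : Fintype Γ) (h : ℕ → List Γ),
    (∀ n, (h n).length = n) ∧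
    ∃ L : Language (σ × Γ), IsDCFL L ∧
      ∀ x : List σ, x ∈ P ↔ x.zip (h x.length) ∈ L


namespace DCFLAux

inductive Q3 | qE | qF | qT deriving DecidableEq
inductive G2 | A | Z deriving DecidableEq

instance : Fintype Q3 := ⟨{Q3.qE, Q3.qF, Q3.qT}, fun x => by cases x <;> simp⟩
instance : Fintype G2 := ⟨{G2.A, G2.Z}, fun x => by cases x <;> simp⟩

variable {α : Type}

def stepEq (π : α → Bool) (q : Q3) (a : Option α) (g : G2) : Option (Q3 × List G2) :=
  match a with
  | none => none
  | some a =>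
    match q, π a, g with
    | .qE, false, .Z => some (.qF, [.Z])
    | .qE, true, .Z => some (.qT, [.Z])
    | .qE, _, .A => none
    | .qF, false, g => some (.qF, [.A, g])
    | .qF, true, .A => some (.qF, [])
    | .qF, true, .Z => some (.qE, [.Z])
    | .qT, true, g => some (.qT, [.A, g])
    | .qT, false, .A => some (.qT, [])
    | .qT, false, .Z => some (.qE, [.Z])

def Meq (π : α → Bool) : DPDA α Q3 G2 where
  start := .qE
  startSym := .Z
  step := stepEq π
  final := {.qE}
  deterministic := by intro q γ hq a; simp [stepEq] at hq

def enc (d : ℤ) : Q3 × List G2 :=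
  if d = 0 then (.qE, [.Z])
  else if 0 < d then (.qF, List.replicate (d.toNat - 1) .A ++ [.Z])
  else (.qT, List.replicate ((-d).toNat - 1) .A ++ [.Z])

def dlt (b : Bool) : ℤ := if b then -1 else 1

def Dv (π : α → Bool) (x : List α) : ℤ :=
  ((x.map π).count false : ℤ) - ((x.map π).count true : ℤ)

lemma Dv_nil (π : α → Bool) : Dv π [] = 0 := by simp [Dv]

lemma Dv_cons (π : α → Bool) (a : α) (w : List α) :
    Dv π (a :: w) = dlt (π a) + Dv π w := by
  cases hb : π a <;> simp [Dv, dlt, hb, List.count_cons] <;> push_cast <;> ring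

lemma enc_zero : enc 0 = (.qE, [.Z]) := by simp [enc]

lemma step_enc (π : α → Bool) (d : ℤ) (a : α) :
    ∃ q t s q' u, enc d = (q, t :: s) ∧ stepEq π q (some a) t = some (q', u) ∧
      (q', u ++ s) = enc (d + dlt (π a)) := by
  have henc : ∀ e : ℤ, 2 ≤ e →
      enc e = (.qF, .A :: (List.replicate (e.toNat - 2) .A ++ [.Z])) := by
    intro e he
    rw [enc, if_neg (by omega), if_pos (by omega)]
    rw [show e.toNat - 1 = (e.toNat - 2) + 1 by omega, List.replicate_succ]
    simp
  have henc' : ∀ e : ℤ, e ≤ -2 →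
      enc e = (.qT, .A :: (List.replicate ((-e).toNat - 2) .A ++ [.Z])) := by
    intro e he
    rw [enc, if_neg (by omega), if_neg (by omega)]
    rw [show (-e).toNat - 1 = ((-e).toNat - 2) + 1 by omega, List.replicate_succ]
    simp
  rcases (by omega : d = 0 ∨ d = 1 ∨ 2 ≤ d ∨ d = -1 ∨ d ≤ -2) with rfl | rfl | hd | rfl | hd <;>
    cases hb : π a
  · exact ⟨.qE, .Z, [], .qF, [.Z], by simp [enc], by simp [stepEq, hb], by simp [enc, dlt]⟩
  · exact ⟨.qE, .Z, [], .qT, [.Z], by simp [enc], by simp [stepEq, hb], by simp [enc, dlt]⟩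
  · refine ⟨.qF, .Z, [], .qF, [.A, .Z], by simp [enc], by simp [stepEq, hb], ?_⟩
    rw [show (1 : ℤ) + dlt false = 2 by simp [dlt], henc 2 le_rfl]; simp
  · refine ⟨.qF, .Z, [], .qE, [.Z], by simp [enc], by simp [stepEq, hb], ?_⟩
    rw [show (1 : ℤ) + dlt true = 0 by simp [dlt], enc_zero]
    simp
  · refine ⟨.qF, .A, List.replicate (d.toNat - 2) .A ++ [.Z], .qF, [.A, .A],
      henc d hd, by simp [stepEq, hb], ?_⟩
    rw [show d + dlt false = d + 1 by simp [dlt], henc (d + 1) (by omega)]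
    rw [show (d + 1).toNat - 2 = (d.toNat - 2) + 1 by omega, List.replicate_succ]
    simp
  · refine ⟨.qF, .A, List.replicate (d.toNat - 2) .A ++ [.Z], .qF, [],
      henc d hd, by simp [stepEq, hb], ?_⟩
    rw [show d + dlt true = d - 1 by simp [dlt]; ring]
    rcases (by omega : d = 2 ∨ 2 ≤ d - 1) with rfl | h2
    · simp [enc]
    · rw [henc (d - 1) h2, show (d - 1).toNat - 2 = d.toNat - 2 - 1 by omega]
      rw [show d.toNat - 2 = (d.toNat - 2 - 1) + 1 by omega, List.replicate_succ]
      simp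
  · refine ⟨.qT, .Z, [], .qE, [.Z], by simp [enc], by simp [stepEq, hb], ?_⟩
    rw [show (-1 : ℤ) + dlt false = 0 by simp [dlt], enc_zero]
    simp
  · refine ⟨.qT, .Z, [], .qT, [.A, .Z], by simp [enc], by simp [stepEq, hb], ?_⟩
    rw [show (-1 : ℤ) + dlt true = -2 by simp [dlt], henc' (-2) le_rfl]; simp
  · refine ⟨.qT, .A, List.replicate ((-d).toNat - 2) .A ++ [.Z], .qT, [],
      henc' d hd, by simp [stepEq, hb], ?_⟩
    rw [show d + dlt false = d + 1 by simp [dlt]]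
    rcases (by omega : d = -2 ∨ d + 1 ≤ -2) with rfl | h2
    · simp [enc]
    · rw [henc' (d + 1) h2, show (-(d + 1)).toNat - 2 = (-d).toNat - 2 - 1 by omega]
      rw [show (-d).toNat - 2 = ((-d).toNat - 2 - 1) + 1 by omega, List.replicate_succ]
      simp
  · refine ⟨.qT, .A, List.replicate ((-d).toNat - 2) .A ++ [.Z], .qT, [.A, .A],
      henc' d hd, by simp [stepEq, hb], ?_⟩
    rw [show d + dlt true = d - 1 by simp [dlt]; ring, henc' (d - 1) (by omega)]
    rw [show (-(d - 1)).toNat - 2 = ((-d).toNat - 2) + 1 by omega, List.replicate_succ]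
    simp

lemma steps_enc (π : α → Bool) : ∀ (x : List α) (d : ℤ),
    (Meq π).Steps (enc d) x (enc (d + Dv π x))
  | [], d => by simpa [Dv_nil] using DPDA.Steps.refl (M := Meq π) (enc d)
  | a :: w, d => by
    obtain ⟨q, t, s, q', u, h1, h2, h3⟩ := step_enc π d a
    rw [h1]
    refine DPDA.Steps.read h2 ?_
    rw [h3, Dv_cons, ← add_assoc]
    exact steps_enc π w (d + dlt (π a))

lemma steps_enc_inv (π : α → Bool) {c x c'} (h : (Meq π).Steps c x c') :
    ∀ d, c = enc d → c' = enc (d + Dv π x) := by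
  induction h with
  | refl c => intro d hd; simpa [Dv_nil] using hd
  | @read q a t s q' u w c0 hstep _ ih =>
    intro d hd
    obtain ⟨q₁, t₁, s₁, q₁', u₁, h1, h2, h3⟩ := step_enc π d a
    rw [h1] at hd
    obtain ⟨rfl, rfl, rfl⟩ : q = q₁ ∧ t = t₁ ∧ s = s₁ := by
      simpa [Prod.ext_iff] using hd
    have hu : q' = q₁' ∧ u = u₁ := by
      have := hstep.symm.trans h2
      simpa [Prod.ext_iff] using this
    obtain ⟨rfl, rfl⟩ := hu
    rw [Dv_cons, ← add_assoc]
    exact ih _ h3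
  | @eps q t s q' u w c0 hstep _ ih =>
    intro d hd
    simp [Meq, stepEq] at hstep

lemma enc_fst (d : ℤ) : (enc d).1 = Q3.qE ↔ d = 0 := by
  unfold enc; split_ifs with h1 h2 <;> simp [h1]

lemma accepts_Meq (π : α → Bool) : (Meq π).accepts = {x | Dv π x = 0} := by
  ext x
  simp only [DPDA.accepts, Set.mem_setOf_eq]
  constructor
  · rintro ⟨q, s, hs, hq⟩
    have h0 : ((Meq π).start, [(Meq π).startSym]) = enc 0 := by
      rw [enc_zero]; rfl
    have := steps_enc_inv π hs 0 h0
    rw [zero_add] at this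
    have hq' : q = Q3.qE := hq
    show Dv π x = 0
    rw [← enc_fst, ← this]
    exact hq'
  · intro hx
    refine ⟨.qE, [.Z], ?_, rfl⟩
    have := steps_enc π x 0
    rw [zero_add, hx, enc_zero] at this
    exact this

lemma equal_isDCFL : IsDCFL { x : List Bool | x.count false = x.count true } := by
  refine ⟨Q3, G2, inferInstance, inferInstance, Meq (id : Bool → Bool), ?_⟩
  rw [accepts_Meq]
  ext x
  simp [Dv, List.map_id, sub_eq_zero, Nat.cast_inj]

lemma equal_not_REGn : ¬ InREGn { x : List Bool | x.count false = x.count true } := by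
  rintro ⟨Γ, finΓ, h, hlen, L, ⟨σS, finσ, M, hM⟩, hL⟩
  classical
  set m := Fintype.card σS with hm
  set a := h (2 * m) with ha
  have hal : a.length = 2 * m := hlen _
  have htake : (a.take m).length = m := by simp [hal]; omega
  set p : Fin (m + 1) → List Bool := fun i =>
    List.replicate (i : ℕ) false ++ List.replicate (m - (i : ℕ)) true with hp
  have hplen : ∀ i : Fin (m + 1), (p i).length = m := by
    intro i; have := i.isLt; simp [hp]; omega
  obtain ⟨i, j, hij, hfij⟩ := Fintype.exists_ne_map_eq_of_card_lt
    (fun i : Fin (m + 1) => M.evalFrom M.start ((p i).zip (a.take m)))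
    (by rw [Fintype.card_fin]; omega)
  set s : List Bool := List.replicate (m - (i : ℕ)) false ++ List.replicate (i : ℕ) true
    with hs
  have hslen : s.length = m := by have := i.isLt; simp [hs]; omega
  have key : ∀ u : List Bool, u.length = m →
      ((u ++ s) ∈ { x : List Bool | x.count false = x.count true } ↔
        M.evalFrom (M.evalFrom M.start (u.zip (a.take m))) (s.zip (a.drop m)) ∈
          M.accept) := by
    intro u hu
    have hxlen : (u ++ s).length = 2 * m := by simp [hu, hslen]; omega
    refine (hL (u ++ s)).trans ?_
    rw [hxlen, ← ha]
    have hz : (u ++ s).zip a = u.zip (a.take m) ++ s.zip (a.drop m) := by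
      conv_lhs => rw [← List.take_append_drop m a]
      exact List.zip_append (by rw [hu, htake])
    rw [hz, ← hM, DFA.mem_accepts, DFA.eval, DFA.evalFrom_of_append]
  have hvij : (i : ℕ) ≠ (j : ℕ) := fun hv => hij (Fin.ext hv)
  have hilt := i.isLt
  have hjlt := j.isLt
  have h1 : (p i ++ s) ∈ { x : List Bool | x.count false = x.count true } := by
    simp only [Set.mem_setOf_eq, hp, hs, List.count_append, List.count_replicate]
    simp; omega
  have h2 : (p j ++ s) ∉ { x : List Bool | x.count false = x.count true } := by
    simp only [Set.mem_setOf_eq, hp, hs, List.count_append, List.count_replicate]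
    simp; omega
  have e1 := (key (p i) (hplen i)).mp h1
  rw [hfij] at e1
  exact h2 ((key (p j) (hplen j)).mpr e1)

lemma zip_replicate_unit (x : List Bool) :
    x.zip (List.replicate x.length ()) = x.map (fun b => (b, ())) := by
  induction x with
  | nil => rfl
  | cons b t ih => simp [List.replicate_succ, ih]

lemma equal_inDCFLn : InDCFLn { x : List Bool | x.count false = x.count true } := by
  refine ⟨Unit, inferInstance, fun n => List.replicate n (), by simp,
    (Meq (Prod.fst : Bool × Unit → Bool)).accepts,
    ⟨Q3, G2, inferInstance, inferInstance, Meq _, rfl⟩, ?_⟩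
  intro x
  rw [zip_replicate_unit, accepts_Meq]
  have hm : Dv (Prod.fst : Bool × Unit → Bool) (x.map fun b => (b, ())) =
      (x.count false : ℤ) - (x.count true : ℤ) := by
    simp [Dv, List.map_map, Function.comp_def, List.map_id']
  constructor
  · intro hc
    have hc' : x.count false = x.count true := hc
    show Dv (Prod.fst : Bool × Unit → Bool) (x.map fun b => (b, ())) = 0
    rw [hm, sub_eq_zero]
    exact_mod_cast hc'
  · intro hc
    have h0 : Dv (Prod.fst : Bool × Unit → Bool) (x.map fun b => (b, ())) = 0 := hc
    rw [hm, sub_eq_zero] at h0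
    show x.count false = x.count true
    exact_mod_cast h0

end DCFLAux

/-- `DCFL ⊄ REG/n`, hence `REG/n ≠ DCFL/n`.  Concretely, the deterministic
context-free language `Equal = {w ∈ {0,1}* : #₀(w) = #₁(w)}` is not in
`REG/n`. -/
theorem dcfl_not_subset_REGn :
    (∃ P : Language Bool, IsDCFL P ∧ ¬ InREGn P) ∧
    (IsDCFL { x : List Bool | x.count false = x.count true } ∧
      ¬ InREGn { x : List Bool | x.count false = x.count true }) ∧
    ¬ (∀ P : Language Bool, InREGn P ↔ InDCFLn P) := by
  refine ⟨⟨_, DCFLAux.equal_isDCFL, DCFLAux.equal_not_REGn⟩,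
    ⟨DCFLAux.equal_isDCFL, DCFLAux.equal_not_REGn⟩, fun hall => ?_⟩
  exact DCFLAux.equal_not_REGn ((hall _).mpr DCFLAux.equal_inDCFLn)
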